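/- Let F be a finite nonempty index set, (Eⱼ)ⱼ∈F real numbers contained in an interval I of length ℓ, (wⱼ)ⱼ∈F positive weights, and μ ∈ I with μ ≠ Eⱼ for all j. If Σ_{j: Eⱼ>μ} wⱼ/(Eⱼ-μ) = Σ_{j: Eⱼ<μ} wⱼ/(μ-Eⱼ), then Σⱼ wⱼ ≤ (ℓ²/2)·Σⱼ wⱼ/(Eⱼ-μ)². -/

import Mathlib

theorem stmt_4 {ι : Type*} (F : Finset ι) (hF : F.Nonempty)
    (E w : ι → ℝ) (A B μ : ℝ) (ℓ : ℝ) (hℓ : ℓ = B - A)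
    (hE : ∀ j ∈ F, E j ∈ Set.Icc A B)
    (hw : ∀ j ∈ F, 0 < w j)
    (hμ : μ ∈ Set.Icc A B) (hμE : ∀ j ∈ F, E j ≠ μ)
    (heq : ∑ j ∈ F.filter (fun j => μ < E j), w j / (E j - μ)
         = ∑ j ∈ F.filter (fun j => E j < μ), w j / (μ - E j)) :
    ∑ j ∈ F, w j ≤ (ℓ ^ 2 / 2) * ∑ j ∈ F, w j / (E j - μ) ^ 2 := by
  classical
  obtain ⟨hA, hB⟩ := hμ
  have hsplit : ∀ f : ι → ℝ, ∑ j ∈ F, f j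
      = ∑ j ∈ F.filter (fun j => μ < E j), f j
      + ∑ j ∈ F.filter (fun j => E j < μ), f j := by
    intro f
    rw [← Finset.sum_filter_add_sum_filter_not F (fun j => μ < E j) f]
    congr 2
    apply Finset.filter_congr
    intro j hj
    simp only [not_lt]
    constructor
    · intro h; exact lt_of_le_of_ne h (hμE j hj)
    · exact le_of_lt
  set S := ∑ j ∈ F.filter (fun j => μ < E j), w j / (E j - μ) with hS
  -- Step 1: ∑ w ≤ ℓ * S
  have h1P : ∑ j ∈ F.filter (fun j => μ < E j), w j ≤ (B - μ) * S := by
    rw [hS, Finset.mul_sum]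
    apply Finset.sum_le_sum
    intro j hj
    rw [Finset.mem_filter] at hj
    obtain ⟨hjF, hjμ⟩ := hj
    have h0 : 0 < E j - μ := by linarith
    have h2 : E j - μ ≤ B - μ := by linarith [(hE j hjF).2]
    have hd : 0 < w j / (E j - μ) := div_pos (hw j hjF) h0
    calc w j = (E j - μ) * (w j / (E j - μ)) := by field_simp
      _ ≤ (B - μ) * (w j / (E j - μ)) := mul_le_mul_of_nonneg_right h2 hd.le
  have h1N : ∑ j ∈ F.filter (fun j => E j < μ), w j
      ≤ (μ - A) * ∑ j ∈ F.filter (fun j => E j < μ), w j / (μ - E j) := by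
    rw [Finset.mul_sum]
    apply Finset.sum_le_sum
    intro j hj
    rw [Finset.mem_filter] at hj
    obtain ⟨hjF, hjμ⟩ := hj
    have h0 : 0 < μ - E j := by linarith
    have h2 : μ - E j ≤ μ - A := by linarith [(hE j hjF).1]
    have hd : 0 < w j / (μ - E j) := div_pos (hw j hjF) h0
    calc w j = (μ - E j) * (w j / (μ - E j)) := by field_simp
      _ ≤ (μ - A) * (w j / (μ - E j)) := mul_le_mul_of_nonneg_right h2 hd.le
  have hw1 : ∑ j ∈ F, w j ≤ ℓ * S := by
    rw [hsplit w]
    have : (μ - A) * ∑ j ∈ F.filter (fun j => E j < μ), w j / (μ - E j)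
        = (μ - A) * S := by rw [heq]
    have hℓeq : ℓ * S = (B - μ) * S + (μ - A) * S := by rw [hℓ]; ring
    linarith
  -- Step 2: 2 * S ≤ ℓ * T
  set T := ∑ j ∈ F, w j / (E j - μ) ^ 2 with hT
  have h2P : S ≤ ℓ * ∑ j ∈ F.filter (fun j => μ < E j), w j / (E j - μ) ^ 2 := by
    rw [hS, Finset.mul_sum]
    apply Finset.sum_le_sum
    intro j hj
    rw [Finset.mem_filter] at hj
    obtain ⟨hjF, hjμ⟩ := hj
    have h0 : 0 < E j - μ := by linarith
    have h2 : E j - μ ≤ ℓ := by rw [hℓ]; linarith [(hE j hjF).2]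
    have hd : 0 < w j / (E j - μ) ^ 2 := div_pos (hw j hjF) (by positivity)
    calc w j / (E j - μ) = (E j - μ) * (w j / (E j - μ) ^ 2) := by
          field_simp
      _ ≤ ℓ * (w j / (E j - μ) ^ 2) := mul_le_mul_of_nonneg_right h2 hd.le
  have h2N : S ≤ ℓ * ∑ j ∈ F.filter (fun j => E j < μ), w j / (E j - μ) ^ 2 := by
    rw [heq, Finset.mul_sum]
    apply Finset.sum_le_sum
    intro j hj
    rw [Finset.mem_filter] at hj
    obtain ⟨hjF, hjμ⟩ := hj
    have h0 : 0 < μ - E j := by linarith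
    have h2 : μ - E j ≤ ℓ := by rw [hℓ]; linarith [(hE j hjF).1]
    have hd : 0 < w j / (E j - μ) ^ 2 := div_pos (hw j hjF) (by nlinarith)
    calc w j / (μ - E j) = (μ - E j) * (w j / (E j - μ) ^ 2) := by
          rw [show (E j - μ) ^ 2 = (μ - E j) ^ 2 by ring]
          field_simp
      _ ≤ ℓ * (w j / (E j - μ) ^ 2) := mul_le_mul_of_nonneg_right h2 hd.le
  have h2S : 2 * S ≤ ℓ * T := by
    have := hsplit (fun j => w j / (E j - μ) ^ 2)
    rw [hT]
    rw [this]
    linarith [h2P, h2N]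
  have hℓ0 : 0 ≤ ℓ := by rw [hℓ]; linarith
  have hS0 : 0 ≤ S := by
    apply Finset.sum_nonneg
    intro j hj
    rw [Finset.mem_filter] at hj
    exact (div_pos (hw j hj.1) (by linarith [hj.2])).le
  nlinarith [mul_nonneg hℓ0 (sub_nonneg.2 h2S)]
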